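/- Let M' ∈ Sym_2(ℤ_2) be nonsingular such that every entry of (M')⁻¹ − [[0, 1/4],[1/4, 0]] lies in ℤ_2 (the inverse taken over ℚ_2). Then M' is congruent under GL_2(ℤ_2) to [[0, 4],[4, 0]]. -/

import Mathlib

open Matrix MeasureTheory

/-- Congruence of square matrices over `R`: `B = U * A * Uᵀ` for some `U ∈ GL`. -/
def Matrix.Congruent {R : Type*} [CommRing R] {ι : Type*} [Fintype ι] [DecidableEq ι]
    (A B : Matrix ι ι R) : Prop :=
  ∃ U : (Matrix ι ι R)ˣ, (U : Matrix ι ι R) * A * (U : Matrix ι ι R)ᵀ = B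

/-- Congruence of square matrices indexed by two (necessarily equipotent) index types. -/
def Matrix.CongruentTo {R : Type*} [CommRing R] {ι κ : Type*} [Fintype ι] [DecidableEq ι]
    [Fintype κ] [DecidableEq κ] (A : Matrix ι ι R) (B : Matrix κ κ R) : Prop :=
  ∃ e : ι ≃ κ, (A.submatrix e.symm e.symm).Congruent B

section aux

open Polynomial

lemma aux_norm_two : ‖(2:ℤ_[2])‖ = 1/2 := by
  have := @PadicInt.norm_p 2 ⟨Nat.prime_two⟩
  norm_num at this ⊢
  exact_mod_cast this

lemma aux_norm_four : ‖(4:ℤ_[2])‖ = 1/4 := by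
  have : (4:ℤ_[2]) = 2*2 := by norm_num
  rw [this, norm_mul, aux_norm_two]; norm_num

lemma aux_norm_sixteen : ‖(16:ℤ_[2])‖ = 1/16 := by
  have : (16:ℤ_[2]) = 4*4 := by norm_num
  rw [this, norm_mul, aux_norm_four]; norm_num

lemma aux_coe4 : ((4:ℤ_[2]):ℚ_[2]) = 4 := by norm_cast

lemma aux_coe16 : ((16:ℤ_[2]):ℚ_[2]) = 16 := by norm_cast

lemma aux_norm_e (b : ℤ_[2]) : ‖1 + 4*b‖ = 1 := by
  have hb : ‖4*b‖ < 1 := by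
    rw [norm_mul, aux_norm_four]
    nlinarith [PadicInt.norm_le_one b, norm_nonneg b]
  have hne : ‖(1:ℤ_[2])‖ ≠ ‖4*b‖ := by rw [norm_one]; exact (ne_of_lt hb).symm
  rw [PadicInt.norm_add_eq_max_of_ne hne, norm_one]
  exact max_eq_left hb.le

/-- key construction: given a,b,d with the quadratic relation data, produce p, r, s'. -/
lemma aux_construct (a b d : ℤ_[2]) :
    ∃ pp r s' : ℤ_[2], IsUnit s' ∧
      pp * r = 2*a ∧
      pp + 2*(d*r) = 1 + 4*b ∧
      pp - 2*(d*r) = s' := by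
  set e : ℤ_[2] := 1 + 4*b with he
  have hen : ‖e‖ = 1 := aux_norm_e b
  have heu : IsUnit e := PadicInt.isUnit_iff.mpr hen
  -- Hensel: square root of e^2 - 16 a d near e
  set F : Polynomial ℤ_[2] := X^2 - C (e*e - 16*(a*d)) with hF
  have hF1 : F.eval e = 16*(a*d) := by
    simp only [hF, Polynomial.eval_sub, Polynomial.eval_pow, Polynomial.eval_X,
      Polynomial.eval_C]
    ring
  have hF2 : F.derivative.eval e = 2*e := by
    simp only [hF, derivative_sub, derivative_X_pow, derivative_C, sub_zero]
    simp only [Polynomial.eval_mul, Polynomial.eval_pow, Polynomial.eval_X,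
      Polynomial.eval_natCast, Polynomial.eval_C]
    push_cast
    ring
  have h2e : ‖(2:ℤ_[2])*e‖ = 1/2 := by rw [norm_mul, aux_norm_two, hen]; norm_num
  have hnorm : ‖F.eval e‖ < ‖F.derivative.eval e‖^2 := by
    rw [hF1, hF2, h2e]
    have : ‖(16:ℤ_[2])*(a*d)‖ ≤ 1/16 := by
      rw [norm_mul, aux_norm_sixteen]
      nlinarith [PadicInt.norm_le_one (a*d), norm_nonneg (a*d)]
    nlinarith
  obtain ⟨s', hs'0, hs'near, -, -⟩ := hensels_lemma hnorm
  rw [Polynomial.coe_aeval_eq_eval, hF2, h2e] at hs'near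
  have hs'sq : s' * s' = e*e - 16*(a*d) := by
    have : s'^2 - (e*e - 16*(a*d)) = 0 := by simpa [hF] using hs'0
    linear_combination this
  have hs'n : ‖s'‖ = 1 := by
    have h1 : s' = e + (s' - e) := by ring
    have hne : ‖e‖ ≠ ‖s' - e‖ := by rw [hen]; nlinarith
    rw [h1, PadicInt.norm_add_eq_max_of_ne hne, hen]
    apply max_eq_left; nlinarith
  have hs'u : IsUnit s' := PadicInt.isUnit_iff.mpr hs'n
  -- e + s' is divisible by 2, with unit quotient
  have hes : ‖e + s'‖ = 1/2 := by
    have h1 : e + s' = 2*e + (s' - e) := by ring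
    have hne : ‖(2:ℤ_[2])*e‖ ≠ ‖s' - e‖ := by rw [h2e]; nlinarith
    rw [h1, PadicInt.norm_add_eq_max_of_ne hne, h2e]
    apply max_eq_left; nlinarith [hs'near]
  have hdvd : (2:ℤ_[2]) ∣ (e + s') := by
    have : ((2:ℕ):ℤ_[2]) ∣ (e + s') := by
      rw [← PadicInt.norm_lt_one_iff_dvd]
      rw [hes]; norm_num
    simpa using this
  obtain ⟨pp, hpp2⟩ := hdvd
  have hpp : 2 * pp = e + s' := hpp2.symm
  have hppn : ‖pp‖ = 1 := by
    have : ‖(2:ℤ_[2]) * pp‖ = 1/2 := by rw [hpp, hes]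
    rw [norm_mul, aux_norm_two] at this
    linarith
  have hppu : IsUnit pp := PadicInt.isUnit_iff.mpr hppn
  have hppne : pp ≠ 0 := hppu.ne_zero
  have h4ne : (4:ℤ_[2]) ≠ 0 := by
    intro hz
    have := aux_norm_four
    rw [hz, norm_zero] at this; norm_num at this
  set r : ℤ_[2] := (↑hppu.unit⁻¹ : ℤ_[2]) * (2*a) with hr
  have hpr : pp * r = 2*a := by
    rw [hr, ← mul_assoc]
    nth_rewrite 1 [← hppu.unit_spec]
    rw [Units.mul_inv, one_mul]
  have K1 : pp*pp + 4*(a*d) = e*pp := by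
    apply mul_left_cancel₀ h4ne
    linear_combination (2*pp - e + s') * hpp + hs'sq
  have K2 : pp*pp - 4*(a*d) = s'*pp := by
    apply mul_left_cancel₀ h4ne
    linear_combination (2*pp + e - s') * hpp - hs'sq
  refine ⟨pp, r, s', hs'u, hpr, ?_, ?_⟩
  · apply mul_left_cancel₀ hppne
    linear_combination 2*d*hpr + K1
  · apply mul_left_cancel₀ hppne
    linear_combination -(2*d*hpr) + K2

end aux

set_option maxHeartbeats 1000000

/-- Let `M' ∈ Sym_2(ℤ_2)` be nonsingular with every entry of
`(M')⁻¹ - [[0,1/4],[1/4,0]]` in `ℤ_2` (inverse over `ℚ_2`). Then `M'` is congruent under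
`GL_2(ℤ_2)` to `[[0,4],[4,0]]`. -/
theorem stmt_7 (M' : Matrix (Fin 2) (Fin 2) ℤ_[2]) (hs : M'.IsSymm) (hd : M'.det ≠ 0)
    (h : ∀ i j, ‖((M'.map (fun a => (a : ℚ_[2])))⁻¹ -
      (!![0, 1 / 4; 1 / 4, 0] : Matrix (Fin 2) (Fin 2) ℚ_[2])) i j‖ ≤ 1) :
    M'.Congruent !![0, 4; 4, 0] := by
  classical
  set c : ℤ_[2] → ℚ_[2] := fun a => (a : ℚ_[2]) with hc
  set Mq : Matrix (Fin 2) (Fin 2) ℚ_[2] := M'.map c with hMqdef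
  set N : Matrix (Fin 2) (Fin 2) ℚ_[2] := Mq⁻¹ with hNdef
  -- map commutes with multiplication
  have hmm : ∀ A B : Matrix (Fin 2) (Fin 2) ℤ_[2], (A*B).map c = A.map c * B.map c := by
    intro A B
    ext i j
    simp [Matrix.mul_apply, Fin.sum_univ_two, Matrix.map_apply, hc]
  have hMqa : ∀ i j, Mq i j = ((M' i j : ℤ_[2]) : ℚ_[2]) := fun i j => rfl
  have hdetq : Mq.det ≠ 0 := by
    have heq : Mq.det = (M'.det : ℚ_[2]) := by
      rw [Matrix.det_fin_two, Matrix.det_fin_two, hMqa, hMqa, hMqa, hMqa]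
      push_cast
      ring
    rw [heq]
    exact PadicInt.coe_ne_zero.mpr hd
  have hMN : Mq * N = 1 := Matrix.mul_nonsing_inv _ (isUnit_iff_ne_zero.mpr hdetq)
  have hNM : N * Mq = 1 := Matrix.nonsing_inv_mul _ (isUnit_iff_ne_zero.mpr hdetq)
  -- symmetry of N
  have hMqs : Mqᵀ = Mq := by
    rw [hMqdef, ← Matrix.transpose_map, hs.eq]
  have hNs : Nᵀ = N := by
    rw [hNdef, Matrix.transpose_nonsing_inv, hMqs]
  have hNsym : N 1 0 = N 0 1 := by
    have := congrFun (congrFun hNs 0) 1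
    simpa [Matrix.transpose_apply] using this
  -- entries of N
  have ha0 : ‖N 0 0‖ ≤ 1 := by simpa using h 0 0
  have hb0 : ‖N 0 1 - 1/4‖ ≤ 1 := by simpa using h 0 1
  have hd0 : ‖N 1 1‖ ≤ 1 := by simpa using h 1 1
  set a : ℤ_[2] := ⟨N 0 0, ha0⟩ with hadef
  set b : ℤ_[2] := ⟨N 0 1 - 1/4, hb0⟩ with hbdef
  set d : ℤ_[2] := ⟨N 1 1, hd0⟩ with hddef
  have hac : (a : ℚ_[2]) = N 0 0 := rfl
  have hbc : (b : ℚ_[2]) = N 0 1 - 1/4 := rfl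
  have hdc : (d : ℚ_[2]) = N 1 1 := rfl
  obtain ⟨pp, r, s', hs'u, hpr, hodr, hdd⟩ := aux_construct a b d
  set e : ℤ_[2] := 1 + 4*b with hedef
  have hec : (e : ℚ_[2]) = 4 * N 0 1 := by
    rw [hedef]
    push_cast [hbc, aux_coe4]
    ring
  set U : Matrix (Fin 2) (Fin 2) ℤ_[2] := !![pp, 2*d; r, 1] with hUdef
  have hUdet : U.det = s' := by
    rw [hUdef, Matrix.det_fin_two_of]
    linear_combination hdd
  have hUu : IsUnit U := (Matrix.isUnit_iff_isUnit_det U).mpr (by rw [hUdet]; exact hs'u)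
  -- the integral congruence computation
  have hUt : Uᵀ = !![pp, r; 2*d, 1] := by
    rw [hUdef]
    ext i j
    fin_cases i <;> fin_cases j <;> simp
  have claimZ : Uᵀ * !![0,4;4,0] * U = !![16*a, 4*e; 4*e, 16*d] := by
    rw [hUt, hUdef]
    ext i j
    fin_cases i <;> fin_cases j
    · simp [Matrix.mul_apply, Fin.sum_univ_two]
      linear_combination 8*hpr
    · simp [Matrix.mul_apply, Fin.sum_univ_two]
      linear_combination 4*hodr
    · simp [Matrix.mul_apply, Fin.sum_univ_two]
      linear_combination 4*hodr
    · simp [Matrix.mul_apply, Fin.sum_univ_two]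
      ring
  -- pass to ℚ_2
  set Uq : Matrix (Fin 2) (Fin 2) ℚ_[2] := U.map c with hUqdef
  set Aq : Matrix (Fin 2) (Fin 2) ℚ_[2] := !![0,4;4,0] with hAqdef
  have hUqt : (Uᵀ).map c = Uqᵀ := by
    rw [Matrix.transpose_map, hUqdef]
  have hZq : (!![0,4;4,0] : Matrix (Fin 2) (Fin 2) ℤ_[2]).map c = Aq := by
    ext i j
    fin_cases i <;> fin_cases j <;> simp [hc, hAqdef, Matrix.map_apply, aux_coe4]
  have claimQ : Uqᵀ * Aq * Uq = (16:ℚ_[2]) • N := by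
    have h1 : (Uᵀ * !![0,4;4,0] * U).map c = Uqᵀ * Aq * Uq := by
      rw [hmm, hmm, hUqt, hZq]
    rw [← h1, claimZ]
    ext i j
    fin_cases i <;> fin_cases j <;>
        simp [hc, Matrix.map_apply, Matrix.smul_apply, aux_coe16, aux_coe4, hac, hdc, hec,
          hNsym] <;>
      ring
  have h16 : (16:ℚ_[2]) ≠ 0 := by norm_num
  have step1 : (Uqᵀ * Aq) * (Uq * Mq) = (16:ℚ_[2]) • 1 := by
    calc (Uqᵀ * Aq) * (Uq * Mq) = (Uqᵀ * Aq * Uq) * Mq := by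
          rw [mul_assoc, mul_assoc, mul_assoc]
      _ = ((16:ℚ_[2]) • N) * Mq := by rw [claimQ]
      _ = (16:ℚ_[2]) • (N * Mq) := by rw [smul_mul_assoc]
      _ = (16:ℚ_[2]) • 1 := by rw [hNM]
  have step2 : (Uq * Mq) * (Uqᵀ * Aq) = (16:ℚ_[2]) • 1 := by
    have e1 : ((16:ℚ_[2])⁻¹ • (Uqᵀ * Aq)) * (Uq * Mq) = 1 := by
      rw [smul_mul_assoc, step1, smul_smul, inv_mul_cancel₀ h16, one_smul]
    have e2 := mul_eq_one_comm.mp e1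
    rw [mul_smul_comm] at e2
    calc (Uq * Mq) * (Uqᵀ * Aq)
        = (16:ℚ_[2]) • ((16:ℚ_[2])⁻¹ • ((Uq * Mq) * (Uqᵀ * Aq))) := by
          rw [smul_smul, mul_inv_cancel₀ h16, one_smul]
      _ = (16:ℚ_[2]) • (1 : Matrix (Fin 2) (Fin 2) ℚ_[2]) := by rw [e2]
  have hAq2 : Aq * Aq = (16:ℚ_[2]) • 1 := by
    ext i j
    fin_cases i <;> fin_cases j <;>
        simp [hAqdef, Matrix.mul_apply, Fin.sum_univ_two, Matrix.one_apply,
          Matrix.smul_apply] <;>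
      norm_num
  have final_q : Uq * Mq * Uqᵀ = Aq := by
    have h1 : (Uq * Mq * Uqᵀ) * (Aq * Aq) = (16:ℚ_[2]) • Aq := by
      have h0 : (Uq * Mq * Uqᵀ) * Aq = (16:ℚ_[2]) • 1 := by
        rw [mul_assoc (Uq * Mq) Uqᵀ Aq]; exact step2
      calc (Uq * Mq * Uqᵀ) * (Aq * Aq) = ((Uq * Mq * Uqᵀ) * Aq) * Aq :=
            (mul_assoc _ _ _).symm
        _ = ((16:ℚ_[2]) • 1) * Aq := by rw [h0]
        _ = (16:ℚ_[2]) • Aq := by rw [smul_mul_assoc, one_mul]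
    rw [hAq2, mul_smul_comm, mul_one] at h1
    exact (IsUnit.smul_left_cancel (isUnit_iff_ne_zero.mpr h16)).mp h1
  -- descend to ℤ_2
  have hmap : (U * M' * Uᵀ).map c = Uq * Mq * Uqᵀ := by
    rw [hmm, hmm, hUqt, hMqdef, hUqdef]
  have hfinal : (U * M' * Uᵀ).map c = (!![0,4;4,0] : Matrix (Fin 2) (Fin 2) ℤ_[2]).map c := by
    rw [hmap, hZq, final_q]
  have final_z : U * M' * Uᵀ = !![0,4;4,0] := by
    ext i j
    have := congrFun (congrFun hfinal i) j
    simp only [Matrix.map_apply, hc] at this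
    exact Subtype.coe_injective this
  exact ⟨hUu.unit, by rw [hUu.unit_spec]; exact final_z⟩
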